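/- For every natural number D > 24, there exist infinitely many primes p such that D does not divide (p − 1)(p + 1). -/

import Mathlib

open Nat

lemma aux_key (D d a : ℕ) (hd2 : 2 ≤ d) (hdD : d ∣ D)
    (ha : IsUnit (a : ZMod d))
    (hne : ((a : ZMod d) - 1) * ((a : ZMod d) + 1) ≠ 0) :
    {p : ℕ | p.Prime ∧ ¬ D ∣ (p - 1) * (p + 1)}.Infinite := by
  haveI : NeZero d := ⟨by omega⟩
  refine (Nat.infinite_setOfPred_prime_and_eq_mod ha).mono ?_
  rintro p ⟨hp, hpa⟩
  refine ⟨hp, fun hdvd => hne ?_⟩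
  have h1 : (1 : ℕ) ≤ p := hp.one_lt.le
  have : ((((p - 1) * (p + 1) : ℕ)) : ZMod d) = 0 := by
    rw [ZMod.natCast_eq_zero_iff]
    exact dvd_trans hdD hdvd
  rw [Nat.cast_mul, Nat.cast_sub h1, Nat.cast_add, Nat.cast_one, hpa] at this
  exact this

theorem stmt_6 (D : ℕ) (hD : 24 < D) :
    {p : ℕ | p.Prime ∧ ¬ D ∣ (p - 1) * (p + 1)}.Infinite := by
  by_cases h16 : 16 ∣ D
  · exact aux_key D 16 3 (by norm_num) h16 (by decide) (by decide)
  by_cases h9 : 9 ∣ D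
  · exact aux_key D 9 2 (by norm_num) h9 (by decide) (by decide)
  by_cases h5 : ∃ q, q.Prime ∧ q ∣ D ∧ 5 ≤ q
  · obtain ⟨q, hq, hqD, hq5⟩ := h5
    haveI : Fact q.Prime := ⟨hq⟩
    refine aux_key D q 2 hq.two_le hqD ?_ ?_
    · exact (ZMod.isUnit_iff_coprime 2 q).mpr
        (((Nat.coprime_primes Nat.prime_two hq).mpr (by omega)))
    · have h3 : (((2 : ℕ) : ZMod q) - 1) * (((2 : ℕ) : ZMod q) + 1) = ((3 : ℕ) : ZMod q) := by
        push_cast; ring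
      rw [h3, Ne, ZMod.natCast_eq_zero_iff]
      intro h
      have := Nat.le_of_dvd (by norm_num) h
      omega
  · exfalso
    push_neg at h5
    have hD0 : D ≠ 0 := by omega
    have hdvd : D ∣ 24 := by
      rw [← Nat.factorization_le_iff_dvd hD0 (by norm_num)]
      refine Finsupp.le_def.mpr fun p => ?_
      by_cases hp : p.Prime
      · by_cases hp2 : p = 2
        · subst hp2
          have h4 : ¬ 4 ≤ D.factorization 2 := fun h =>
            h16 ((Nat.Prime.pow_dvd_iff_le_factorization Nat.prime_two hD0).mpr h)
          have h24 : 3 ≤ (24 : ℕ).factorization 2 :=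
            (Nat.Prime.pow_dvd_iff_le_factorization Nat.prime_two (by norm_num)).mp
              (by norm_num)
          omega
        by_cases hp3 : p = 3
        · subst hp3
          have h4 : ¬ 2 ≤ D.factorization 3 := fun h =>
            h9 ((Nat.Prime.pow_dvd_iff_le_factorization Nat.prime_three hD0).mpr h)
          have h24 : 1 ≤ (24 : ℕ).factorization 3 :=
            (Nat.Prime.pow_dvd_iff_le_factorization Nat.prime_three (by norm_num)).mp
              (by norm_num)
          omega
        · have hp5 : 5 ≤ p := by
            have h2 := hp.two_le
            have : p ≠ 4 := by rintro rfl; norm_num at hp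
            omega
          have : ¬ p ∣ D := fun h => by have := h5 p hp h; omega
          simp [Nat.factorization_eq_zero_of_not_dvd this]
      · simp [Nat.factorization_eq_zero_of_not_prime _ hp]
    have := Nat.le_of_dvd (by norm_num) hdvd
    omega
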